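/- Define for φ ∈ 𝒢₀[n] and f ∈ F_m: φ • f := Σ_{i=1}^{m} (φ^{i,…,i+n−1} − φ^{i+1,…,i+n}) f^{1,…,i−1,(i⋯i+n),i+n+1,…,n+m} − φ^{1,…,n} f^{n+1,…,n+m} + φ^{n+1,…,n+m} f^{1,…,m}. This formula defines a Lie module structure of the graded Lie algebra 𝒢₀ on F = ⊕_{m≥0} F_m, i.e. (φ•(ψ•f)) − (ψ•(φ•f)) = [φ,ψ]₀ • f for the bracket [·,·]₀ of 𝒢₀. -/

import Mathlib

/-- Functional model: an element of `𝒢₀[n]` or `F_n` is represented by a function of the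
variables `x₁, x₂, …` (indexed from `0`) depending on its first `n` arguments.
`shiftArg i g` is `g^{i+1,…,i+n}`: `g` evaluated at `x_{i+1}, x_{i+2}, …`. -/
def shiftArg (i : ℕ) (g : (ℕ → ℂ) → ℂ) : (ℕ → ℂ) → ℂ :=
  fun x => g (fun j => x (j + i))

/-- `mergeArg i L g`: `g` with the `L` consecutive variables `x_{i+1},…,x_{i+L}`
(0-indexed position `i`) replaced by their sum. -/
noncomputable def mergeArg (i L : ℕ) (g : (ℕ → ℂ) → ℂ) : (ℕ → ℂ) → ℂ :=
  fun x => g (fun j =>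
    if j < i then x j
    else if j = i then ∑ t ∈ Finset.range L, x (i + t)
    else x (j + L - 1))

/-- `g` depends only on its first `p` arguments. -/
def Arity (p : ℕ) (g : (ℕ → ℂ) → ℂ) : Prop :=
  ∀ x y : ℕ → ℂ, (∀ j, j < p → x j = y j) → g x = g y

/-- Invariance of `φ ∈ ℂ[x₁,…,xₙ][(x₁⋯xₙ(x₁+⋯+xₙ))⁻¹]` under the cyclic group `C_{n+1}`
acting via the identification with `ℂ[x₁,…,x_{n+1}]/(x₁+⋯+x_{n+1})`:
`φ(x₁,…,xₙ) = φ(x₂,…,xₙ,−(x₁+⋯+xₙ))`. -/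
def CycInv (n : ℕ) (φ : (ℕ → ℂ) → ℂ) : Prop :=
  ∀ x : ℕ → ℂ,
    φ x = φ (fun j => if j = n - 1 then -(∑ i ∈ Finset.range n, x i) else x (j + 1))

/-- The action `φ • f` of `φ ∈ 𝒢₀[n]` on `f ∈ F_m`:
`φ • f = Σ_{i=1}^{m}(φ^{i,…,i+n−1} − φ^{i+1,…,i+n}) f^{1,…,i−1,(i⋯i+n),i+n+1,…,n+m}
− φ^{1,…,n} f^{n+1,…,n+m} + φ^{m+1,…,n+m} f^{1,…,m}`. -/
noncomputable def Act (n m : ℕ) (φ f : (ℕ → ℂ) → ℂ) : (ℕ → ℂ) → ℂ :=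
  fun x =>
    (∑ i ∈ Finset.range m, (shiftArg i φ x - shiftArg (i + 1) φ x) * mergeArg i (n + 1) f x)
    - shiftArg 0 φ x * shiftArg n f x + shiftArg m φ x * shiftArg 0 f x

/-- The bracket `[φ,ψ]₀` of `𝒢₀`, for `φ` of `n` arguments and `ψ` of `m` arguments. -/
noncomputable def Br0 (n m : ℕ) (φ ψ : (ℕ → ℂ) → ℂ) : (ℕ → ℂ) → ℂ :=
  fun x =>
    (∑ i ∈ Finset.range m, (shiftArg i φ x - shiftArg (i + 1) φ x) * mergeArg i (n + 1) ψ x)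
    - (∑ j ∈ Finset.range n, (shiftArg j ψ x - shiftArg (j + 1) ψ x) * mergeArg j (m + 1) φ x)
    - shiftArg 0 φ x * shiftArg n ψ x + shiftArg m φ x * shiftArg 0 ψ x

open Finset

private lemma shift_zero (g : (ℕ → ℂ) → ℂ) : shiftArg 0 g = g := rfl

private lemma shift_shift (a b : ℕ) (g : (ℕ → ℂ) → ℂ) :
    shiftArg a (shiftArg b g) = shiftArg (a + b) g := by
  funext x
  show g _ = g _
  congr 1
  funext j
  beta_reduce
  congr 1
  omega

private lemma shift_arity {q : ℕ} {g : (ℕ → ℂ) → ℂ} (hg : Arity q g) (a : ℕ) :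
    Arity (a + q) (shiftArg a g) := by
  intro x y h
  exact hg _ _ fun j hj => h _ (by omega)

private lemma merge_high {q c : ℕ} {g : (ℕ → ℂ) → ℂ} (hg : Arity q g) (hc : q ≤ c) (L : ℕ) :
    mergeArg c L g = g := by
  funext x
  exact hg _ _ fun j hj => by simp [mergeArg, show j < c by omega]

private lemma mshift_low {q a i : ℕ} {g : (ℕ → ℂ) → ℂ} (hg : Arity q g) (h : a + q ≤ i) (L : ℕ) :
    mergeArg i L (shiftArg a g) = shiftArg a g :=
  merge_high (shift_arity hg a) (by omega) L

private lemma mshift_high {i a : ℕ} (n : ℕ) (g : (ℕ → ℂ) → ℂ) (h : i < a) :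
    mergeArg i (n + 1) (shiftArg a g) = shiftArg (a + n) g := by
  funext x
  show g _ = g _
  congr 1
  funext j
  beta_reduce
  rw [if_neg (by omega), if_neg (by omega)]
  congr 1
  omega

private lemma mshift_mid (a c L : ℕ) (g : (ℕ → ℂ) → ℂ) :
    mergeArg (a + c) L (shiftArg a g) = shiftArg a (mergeArg c L g) := by
  funext x
  show g _ = g _
  congr 1
  funext j
  beta_reduce
  by_cases h1 : j < c
  · rw [if_pos (by omega : j + a < a + c), if_pos h1]
  · by_cases h2 : j = c
    · rw [if_neg (by omega), if_pos (by omega : j + a = a + c), if_neg h1, if_pos h2]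
      exact Finset.sum_congr rfl fun t _ => by congr 1; omega
    · rw [if_neg (by omega), if_neg (by omega : ¬ j + a = a + c), if_neg h1, if_neg h2]
      congr 1
      omega
private lemma sumIcoShift (F : ℕ → ℂ) (a b c : ℕ) :
    ∑ i ∈ Finset.Ico (a + c) (b + c), F i = ∑ i ∈ Finset.Ico a b, F (i + c) := by
  rw [Finset.sum_Ico_eq_sum_range, Finset.sum_Ico_eq_sum_range, show b + c - (a + c) = b - a by omega]
  exact Finset.sum_congr rfl fun t _ => by congr 1; omega

private lemma split3 (F : ℕ → ℂ) (a b N : ℕ) (h1 : a ≤ b) (h2 : b ≤ N) :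
    ∑ i ∈ Finset.range N, F i
      = ((∑ i ∈ Finset.range a, F i) + ∑ i ∈ Finset.Ico a b, F i) + ∑ i ∈ Finset.Ico b N, F i := by
  rw [Finset.range_eq_Ico, Finset.range_eq_Ico,
    Finset.sum_Ico_consecutive _ (Nat.zero_le a) h1, Finset.sum_Ico_consecutive _ (by omega : (0:ℕ) ≤ b) h2]

private lemma triExchange (p : ℕ) (F : ℕ → ℕ → ℂ) :
    ∑ k ∈ Finset.range p, ∑ j ∈ Finset.Ico (k + 1) p, F k j
      = ∑ k ∈ Finset.range p, ∑ i ∈ Finset.range k, F i k := by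
  induction p with
  | zero => simp
  | succ p ih =>
    rw [Finset.sum_range_succ, Finset.sum_range_succ,
      Finset.sum_congr rfl (fun k hk =>
        Finset.sum_Ico_succ_top (by simp at hk; omega) (F k)),
      Finset.sum_add_distrib, ih]
    simp

private lemma merge_merge_nested (g : (ℕ → ℂ) → ℂ) (L L' k c : ℕ) (hc : c ≤ L') :
    mergeArg (k + c) (L + 1) (mergeArg k (L' + 1) g) = mergeArg k (L + L' + 1) g := by
  funext x
  show g _ = g _
  congr 1
  funext j
  beta_reduce
  by_cases h1 : j < k
  · rw [if_pos h1, if_pos h1, if_pos (show j < k + c by omega)]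
  · by_cases h2 : j = k
    · rw [if_neg h1, if_pos h2, if_neg h1, if_pos h2]
      rw [split3 _ c (c+1) (L'+1) (by omega) (by omega),
          split3 _ c (c+(L+1)) (L+L'+1) (by omega) (by omega)]
      congr 1
      · congr 1
        · exact Finset.sum_congr rfl fun u hu => by
            simp only [Finset.mem_range] at hu
            rw [if_pos (show k + u < k + c by omega)]
        · rw [Finset.sum_Ico_succ_top (le_refl c), Finset.Ico_self, Finset.sum_empty, zero_add,
            if_neg (by omega), if_pos rfl, Finset.sum_Ico_eq_sum_range,
            show c + (L + 1) - c = L + 1 by omega]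
          exact Finset.sum_congr rfl fun t _ => by congr 1; omega
      · rw [Finset.sum_Ico_eq_sum_range, Finset.sum_Ico_eq_sum_range,
          show L' + 1 - (c + 1) = L + L' + 1 - (c + (L + 1)) by omega]
        refine Finset.sum_congr rfl fun t ht => ?_
        rw [if_neg (by omega), if_neg (by omega)]
        congr 1
        omega
    · rw [if_neg h1, if_neg h2, if_neg h1, if_neg h2,
        if_neg (show ¬ j + (L' + 1) - 1 < k + c from by omega),
        if_neg (show ¬ j + (L' + 1) - 1 = k + c from by omega)]
      congr 1
      omega

private lemma merge_merge_swap (g : (ℕ → ℂ) → ℂ) (L L' a b : ℕ) (h : a < b) :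
    mergeArg a (L + 1) (mergeArg b (L' + 1) g) = mergeArg (b + L) (L' + 1) (mergeArg a (L + 1) g) := by
  funext x
  show g _ = g _
  congr 1
  funext j
  beta_reduce
  by_cases h1 : j < a
  · rw [if_pos (by omega : j < b), if_pos h1, if_pos h1, if_pos (by omega : j < b + L)]
  · by_cases h2 : j = a
    · rw [if_pos (by omega : j < b), if_neg h1, if_pos h2, if_neg h1, if_pos h2]
      exact Finset.sum_congr rfl fun t ht => by
        simp only [Finset.mem_range] at ht
        rw [if_pos (by omega : a + t < b + L)]
    · by_cases h3 : j < b
      · rw [if_pos h3, if_neg h1, if_neg h2, if_neg h1, if_neg h2, if_pos (by omega : j + (L+1) - 1 < b + L)]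
      · by_cases h4 : j = b
        · rw [if_neg h3, if_pos h4, if_neg h1, if_neg h2,
            if_neg (by omega : ¬ j + (L+1) - 1 < b + L), if_pos (by omega : j + (L+1) - 1 = b + L)]
          refine Finset.sum_congr rfl fun t ht => ?_
          simp only [Finset.mem_range] at ht
          rw [if_neg (by omega : ¬ b + t < a), if_neg (by omega : ¬ b + t = a)]
          congr 1
          omega
        · rw [if_neg h3, if_neg h4, if_neg h1, if_neg h2,
            if_neg (by omega : ¬ j + (L+1) - 1 < b + L), if_neg (by omega : ¬ j + (L+1) - 1 = b + L),
            if_neg (by omega : ¬ j + (L'+1) - 1 < a), if_neg (by omega : ¬ j + (L'+1) - 1 = a)]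
          congr 1
          omega
private lemma act_apply (n q : ℕ) (φ h : (ℕ → ℂ) → ℂ) (x : ℕ → ℂ) :
    Act n q φ h x = (∑ i ∈ Finset.range q,
        (shiftArg i φ x - shiftArg (i + 1) φ x) * mergeArg i (n + 1) h x)
      - shiftArg 0 φ x * shiftArg n h x + shiftArg q φ x * shiftArg 0 h x := rfl

private lemma merge_act (n m p i L : ℕ) (ψ f : (ℕ → ℂ) → ℂ) (x : ℕ → ℂ) :
    mergeArg i L (Act m p ψ f) x = (∑ k ∈ Finset.range p,
        (mergeArg i L (shiftArg k ψ) x - mergeArg i L (shiftArg (k + 1) ψ) x)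
          * mergeArg i L (mergeArg k (m + 1) f) x)
      - mergeArg i L (shiftArg 0 ψ) x * mergeArg i L (shiftArg m f) x
      + mergeArg i L (shiftArg p ψ) x * mergeArg i L (shiftArg 0 f) x := rfl

private lemma shift_act (m p a : ℕ) (ψ f : (ℕ → ℂ) → ℂ) (x : ℕ → ℂ) :
    shiftArg a (Act m p ψ f) x = (∑ k ∈ Finset.range p,
        (shiftArg a (shiftArg k ψ) x - shiftArg a (shiftArg (k + 1) ψ) x)
          * shiftArg a (mergeArg k (m + 1) f) x)
      - shiftArg a (shiftArg 0 ψ) x * shiftArg a (shiftArg m f) x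
      + shiftArg a (shiftArg p ψ) x * shiftArg a (shiftArg 0 f) x := rfl

private lemma shift_br (n m k : ℕ) (φ ψ : (ℕ → ℂ) → ℂ) (x : ℕ → ℂ) :
    shiftArg k (Br0 n m φ ψ) x = (∑ i ∈ Finset.range m,
        (shiftArg k (shiftArg i φ) x - shiftArg k (shiftArg (i + 1) φ) x)
          * shiftArg k (mergeArg i (n + 1) ψ) x)
      - (∑ j ∈ Finset.range n,
        (shiftArg k (shiftArg j ψ) x - shiftArg k (shiftArg (j + 1) ψ) x)
          * shiftArg k (mergeArg j (m + 1) φ) x)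
      - shiftArg k (shiftArg 0 φ) x * shiftArg k (shiftArg n ψ) x
      + shiftArg k (shiftArg m φ) x * shiftArg k (shiftArg 0 ψ) x := rfl
private lemma split2 (F : ℕ → ℂ) (a N : ℕ) (h : a ≤ N) :
    ∑ i ∈ Finset.range N, F i
      = (∑ i ∈ Finset.range a, F i) + ∑ i ∈ Finset.Ico a N, F i := by
  rw [Finset.range_eq_Ico, Finset.range_eq_Ico, ← Finset.sum_Ico_consecutive _ (Nat.zero_le a) h]

private lemma side (n m p : ℕ) (φ ψ f : (ℕ → ℂ) → ℂ) (hψ : Arity m ψ) (hf : Arity p f)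
    (x : ℕ → ℂ) :
    Act n (m + p) φ (Act m p ψ f) x =
      (∑ k ∈ Finset.range p, ∑ i ∈ Finset.range k,
          (shiftArg i φ x - shiftArg (i + 1) φ x) *
            ((shiftArg (k + n) ψ x - shiftArg (k + 1 + n) ψ x) *
              mergeArg (k + n) (m + 1) (mergeArg i (n + 1) f) x))
      + (∑ k ∈ Finset.range p,
          ((∑ i ∈ Finset.range m,
              (shiftArg (k + 1 + i) φ x - shiftArg (k + 1 + i + 1) φ x) *
                (shiftArg k (mergeArg (i + 1) (n + 1) ψ) x
                  - shiftArg (k + 1) (mergeArg i (n + 1) ψ) x))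
            + (shiftArg k φ x - shiftArg (k + 1) φ x) *
                (shiftArg k (mergeArg 0 (n + 1) ψ) x - shiftArg (k + 1 + n) ψ x))
          * mergeArg k (n + m + 1) f x)
      + (∑ k ∈ Finset.range p, ∑ k' ∈ Finset.Ico (k + 1) p,
          (shiftArg (k' + m) φ x - shiftArg (k' + m + 1) φ x) *
            ((shiftArg k ψ x - shiftArg (k + 1) ψ x) *
              mergeArg k (m + 1) (mergeArg k' (n + 1) f) x))
      - (∑ i ∈ Finset.range m,
          (shiftArg i φ x - shiftArg (i + 1) φ x) *
            (mergeArg i (n + 1) ψ x * shiftArg (m + n) f x))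
      - (∑ i ∈ Finset.range p,
          (shiftArg (m + i) φ x - shiftArg (m + i + 1) φ x) *
            (ψ x * shiftArg m (mergeArg i (n + 1) f) x))
      + (∑ i ∈ Finset.range p,
          (shiftArg i φ x - shiftArg (i + 1) φ x) *
            (shiftArg (p + n) ψ x * mergeArg i (n + 1) f x))
      + (∑ i ∈ Finset.range m,
          (shiftArg (p + i) φ x - shiftArg (p + i + 1) φ x) *
            (shiftArg p (mergeArg i (n + 1) ψ) x * f x))
      - φ x * ((∑ k ∈ Finset.range p,
            (shiftArg (n + k) ψ x - shiftArg (n + (k + 1)) ψ x) *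
              shiftArg n (mergeArg k (m + 1) f) x)
          - shiftArg n ψ x * shiftArg (n + m) f x + shiftArg (n + p) ψ x * shiftArg n f x)
      + shiftArg (m + p) φ x * ((∑ k ∈ Finset.range p,
            (shiftArg k ψ x - shiftArg (k + 1) ψ x) * mergeArg k (m + 1) f x)
          - ψ x * shiftArg m f x + shiftArg p ψ x * f x) := by
  have hT2 : shiftArg n (Act m p ψ f) x
      = (∑ k ∈ Finset.range p,
            (shiftArg (n + k) ψ x - shiftArg (n + (k + 1)) ψ x) *
              shiftArg n (mergeArg k (m + 1) f) x)
          - shiftArg n ψ x * shiftArg (n + m) f x + shiftArg (n + p) ψ x * shiftArg n f x := by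
    rw [shift_act]
    simp only [shift_shift, Nat.add_zero]
  have hT3 : shiftArg 0 (Act m p ψ f) x
      = (∑ k ∈ Finset.range p,
            (shiftArg k ψ x - shiftArg (k + 1) ψ x) * mergeArg k (m + 1) f x)
          - ψ x * shiftArg m f x + shiftArg p ψ x * f x := by
    rw [shift_zero, act_apply]
    simp only [shift_zero]
  have hT1 : ∑ i ∈ Finset.range (m + p),
        (shiftArg i φ x - shiftArg (i + 1) φ x) * mergeArg i (n + 1) (Act m p ψ f) x
      = (∑ k ∈ Finset.range p, ∑ i ∈ Finset.range k,
          (shiftArg i φ x - shiftArg (i + 1) φ x) *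
            ((shiftArg (k + n) ψ x - shiftArg (k + 1 + n) ψ x) *
              mergeArg (k + n) (m + 1) (mergeArg i (n + 1) f) x))
      + (∑ k ∈ Finset.range p,
          ((∑ i ∈ Finset.range m,
              (shiftArg (k + 1 + i) φ x - shiftArg (k + 1 + i + 1) φ x) *
                (shiftArg k (mergeArg (i + 1) (n + 1) ψ) x
                  - shiftArg (k + 1) (mergeArg i (n + 1) ψ) x))
            + (shiftArg k φ x - shiftArg (k + 1) φ x) *
                (shiftArg k (mergeArg 0 (n + 1) ψ) x - shiftArg (k + 1 + n) ψ x))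
          * mergeArg k (n + m + 1) f x)
      + (∑ k ∈ Finset.range p, ∑ k' ∈ Finset.Ico (k + 1) p,
          (shiftArg (k' + m) φ x - shiftArg (k' + m + 1) φ x) *
            ((shiftArg k ψ x - shiftArg (k + 1) ψ x) *
              mergeArg k (m + 1) (mergeArg k' (n + 1) f) x))
      - (∑ i ∈ Finset.range m,
          (shiftArg i φ x - shiftArg (i + 1) φ x) *
            (mergeArg i (n + 1) ψ x * shiftArg (m + n) f x))
      - (∑ i ∈ Finset.range p,
          (shiftArg (m + i) φ x - shiftArg (m + i + 1) φ x) *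
            (ψ x * shiftArg m (mergeArg i (n + 1) f) x))
      + (∑ i ∈ Finset.range p,
          (shiftArg i φ x - shiftArg (i + 1) φ x) *
            (shiftArg (p + n) ψ x * mergeArg i (n + 1) f x))
      + (∑ i ∈ Finset.range m,
          (shiftArg (p + i) φ x - shiftArg (p + i + 1) φ x) *
            (shiftArg p (mergeArg i (n + 1) ψ) x * f x)) := by
    simp only [merge_act, shift_zero, mul_sub, mul_add, Finset.mul_sum,
      Finset.sum_sub_distrib, Finset.sum_add_distrib]
    rw [Finset.sum_comm]
    have hdbl : ∀ k ∈ Finset.range p,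
        (∑ i ∈ Finset.range (m + p),
          (shiftArg i φ x - shiftArg (i + 1) φ x) *
            ((mergeArg i (n + 1) (shiftArg k ψ) x - mergeArg i (n + 1) (shiftArg (k + 1) ψ) x) *
              mergeArg i (n + 1) (mergeArg k (m + 1) f) x))
        = (∑ i ∈ Finset.range k,
            (shiftArg i φ x - shiftArg (i + 1) φ x) *
              ((shiftArg (k + n) ψ x - shiftArg (k + 1 + n) ψ x) *
                mergeArg (k + n) (m + 1) (mergeArg i (n + 1) f) x))
          + ((∑ i ∈ Finset.range m,
              (shiftArg (k + 1 + i) φ x - shiftArg (k + 1 + i + 1) φ x) *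
                (shiftArg k (mergeArg (i + 1) (n + 1) ψ) x
                  - shiftArg (k + 1) (mergeArg i (n + 1) ψ) x))
            + (shiftArg k φ x - shiftArg (k + 1) φ x) *
                (shiftArg k (mergeArg 0 (n + 1) ψ) x - shiftArg (k + 1 + n) ψ x))
            * mergeArg k (n + m + 1) f x
          + (∑ k' ∈ Finset.Ico (k + 1) p,
            (shiftArg (k' + m) φ x - shiftArg (k' + m + 1) φ x) *
              ((shiftArg k ψ x - shiftArg (k + 1) ψ x) *
                mergeArg k (m + 1) (mergeArg k' (n + 1) f) x)) := by
      intro k hk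
      simp only [Finset.mem_range] at hk
      rw [split3 _ k (k + m + 1) (m + p) (by omega) (by omega)]
      congr 1
      congr 1
      · exact Finset.sum_congr rfl fun i hi => by
          simp only [Finset.mem_range] at hi
          rw [mshift_high n ψ hi, mshift_high n ψ (show i < k + 1 by omega),
            merge_merge_swap f n m i k hi]
      · rw [Finset.sum_Ico_eq_sum_range, show k + m + 1 - k = m + 1 by omega]
        have e : ∀ i ∈ Finset.range (m + 1),
            (shiftArg (k + i) φ x - shiftArg (k + i + 1) φ x) *
              ((mergeArg (k + i) (n + 1) (shiftArg k ψ) x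
                  - mergeArg (k + i) (n + 1) (shiftArg (k + 1) ψ) x) *
                mergeArg (k + i) (n + 1) (mergeArg k (m + 1) f) x)
            = ((shiftArg (k + i) φ x - shiftArg (k + i + 1) φ x) *
                (shiftArg k (mergeArg i (n + 1) ψ) x
                  - mergeArg (k + i) (n + 1) (shiftArg (k + 1) ψ) x))
              * mergeArg k (n + m + 1) f x := fun i hi => by
          simp only [Finset.mem_range] at hi
          rw [mshift_mid k i (n + 1) ψ, merge_merge_nested f n m k i (by omega)]
          ring
        rw [Finset.sum_congr rfl e, ← Finset.sum_mul, Finset.sum_range_succ']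
        congr 1
        congr 1
        · exact Finset.sum_congr rfl fun i _ => by
            rw [show k + (i + 1) = k + 1 + i by omega, mshift_mid (k + 1) i (n + 1) ψ]
        · simp only [Nat.add_zero]
          rw [mshift_high n ψ (Nat.lt_succ_self k)]
      · have hre : (∑ i ∈ Finset.Ico (k + m + 1) (m + p),
            (shiftArg i φ x - shiftArg (i + 1) φ x) *
              ((mergeArg i (n + 1) (shiftArg k ψ) x - mergeArg i (n + 1) (shiftArg (k + 1) ψ) x) *
                mergeArg i (n + 1) (mergeArg k (m + 1) f) x))
            = ∑ k' ∈ Finset.Ico (k + 1) p,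
              (shiftArg (k' + m) φ x - shiftArg (k' + m + 1) φ x) *
                ((mergeArg (k' + m) (n + 1) (shiftArg k ψ) x
                    - mergeArg (k' + m) (n + 1) (shiftArg (k + 1) ψ) x) *
                  mergeArg (k' + m) (n + 1) (mergeArg k (m + 1) f) x) := by
          rw [show k + m + 1 = k + 1 + m by omega, show m + p = p + m by omega]
          exact sumIcoShift _ (k + 1) p m
        rw [hre]
        exact Finset.sum_congr rfl fun k' hk' => by
          simp only [Finset.mem_Ico] at hk'
          rw [mshift_low hψ (show k + m ≤ k' + m by omega) (n + 1),
            mshift_low hψ (show k + 1 + m ≤ k' + m by omega) (n + 1),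
            ← merge_merge_swap f m n k k' (by omega)]
    rw [Finset.sum_congr rfl hdbl, Finset.sum_add_distrib, Finset.sum_add_distrib]
    have hSB : (∑ i ∈ Finset.range (m + p),
        (shiftArg i φ x - shiftArg (i + 1) φ x) *
          (mergeArg i (n + 1) ψ x * mergeArg i (n + 1) (shiftArg m f) x))
      = (∑ i ∈ Finset.range m, (shiftArg i φ x - shiftArg (i + 1) φ x) *
            (mergeArg i (n + 1) ψ x * shiftArg (m + n) f x))
        + ∑ i ∈ Finset.range p, (shiftArg (m + i) φ x - shiftArg (m + i + 1) φ x) *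
            (ψ x * shiftArg m (mergeArg i (n + 1) f) x) := by
      rw [split2 _ m (m + p) (by omega)]
      congr 1
      · exact Finset.sum_congr rfl fun i hi => by
          simp only [Finset.mem_range] at hi
          rw [mshift_high n f hi]
      · rw [Finset.sum_Ico_eq_sum_range, show m + p - m = p by omega]
        exact Finset.sum_congr rfl fun i _ => by
          rw [merge_high hψ (show m ≤ m + i by omega) (n + 1), mshift_mid m i (n + 1) f]
    have hSC : (∑ i ∈ Finset.range (m + p),
        (shiftArg i φ x - shiftArg (i + 1) φ x) *
          (mergeArg i (n + 1) (shiftArg p ψ) x * mergeArg i (n + 1) f x))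
      = (∑ i ∈ Finset.range p, (shiftArg i φ x - shiftArg (i + 1) φ x) *
            (shiftArg (p + n) ψ x * mergeArg i (n + 1) f x))
        + ∑ i ∈ Finset.range m, (shiftArg (p + i) φ x - shiftArg (p + i + 1) φ x) *
            (shiftArg p (mergeArg i (n + 1) ψ) x * f x) := by
      rw [split2 _ p (m + p) (by omega)]
      congr 1
      · exact Finset.sum_congr rfl fun i hi => by
          simp only [Finset.mem_range] at hi
          rw [mshift_high n ψ hi]
      · rw [Finset.sum_Ico_eq_sum_range, show m + p - p = m by omega]
        exact Finset.sum_congr rfl fun i _ => by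
          rw [mshift_mid p i (n + 1) ψ, merge_high hf (show p ≤ p + i by omega) (n + 1)]
    rw [hSB, hSC]
    simp only [mul_sub, Finset.sum_sub_distrib]
    ring
  rw [act_apply, hT1, hT2, hT3, shift_zero φ]
private lemma br_apply0 (n m : ℕ) (φ ψ : (ℕ → ℂ) → ℂ) (x : ℕ → ℂ) :
    Br0 n m φ ψ x = (∑ i ∈ Finset.range m,
        (shiftArg i φ x - shiftArg (i + 1) φ x) * mergeArg i (n + 1) ψ x)
      - (∑ j ∈ Finset.range n,
        (shiftArg j ψ x - shiftArg (j + 1) ψ x) * mergeArg j (m + 1) φ x)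
      - shiftArg 0 φ x * shiftArg n ψ x + shiftArg m φ x * shiftArg 0 ψ x := rfl

private lemma sEq (g : (ℕ → ℂ) → ℂ) (x : ℕ → ℂ) {a b : ℕ} (h : a = b) :
    shiftArg a g x = shiftArg b g x := by rw [h]

private lemma sidebit (N q k : ℕ) (χ ω : (ℕ → ℂ) → ℂ) (hω : Arity N ω) (x : ℕ → ℂ) :
    (∑ i ∈ Finset.range N, (shiftArg (k + 1 + i) χ x - shiftArg (k + 1 + i + 1) χ x) *
        (shiftArg k (mergeArg (i + 1) (q + 1) ω) x - shiftArg (k + 1) (mergeArg i (q + 1) ω) x))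
      + (shiftArg k χ x - shiftArg (k + 1) χ x) *
        (shiftArg k (mergeArg 0 (q + 1) ω) x - shiftArg (k + 1 + q) ω x)
    = (∑ i ∈ Finset.range N, (shiftArg (k + i) χ x - shiftArg (k + i + 1) χ x) *
          shiftArg k (mergeArg i (q + 1) ω) x)
      - (∑ i ∈ Finset.range N, (shiftArg (k + (i + 1)) χ x - shiftArg (k + (i + 1) + 1) χ x) *
          shiftArg (k + 1) (mergeArg i (q + 1) ω) x)
      + (shiftArg (k + N) χ x - shiftArg (k + 1 + N) χ x) * shiftArg k ω x
      - (shiftArg k χ x - shiftArg (k + 1) χ x) * shiftArg (k + 1 + q) ω x := by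
  have h1 : (∑ i ∈ Finset.range N, (shiftArg (k + 1 + i) χ x - shiftArg (k + 1 + i + 1) χ x) *
        (shiftArg k (mergeArg (i + 1) (q + 1) ω) x - shiftArg (k + 1) (mergeArg i (q + 1) ω) x))
      = (∑ i ∈ Finset.range N, (shiftArg (k + (i + 1)) χ x - shiftArg (k + (i + 1) + 1) χ x) *
            shiftArg k (mergeArg (i + 1) (q + 1) ω) x)
        - ∑ i ∈ Finset.range N, (shiftArg (k + (i + 1)) χ x - shiftArg (k + (i + 1) + 1) χ x) *
            shiftArg (k + 1) (mergeArg i (q + 1) ω) x := by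
    rw [← Finset.sum_sub_distrib]
    refine Finset.sum_congr rfl fun i _ => ?_
    rw [sEq χ x (show k + 1 + i = k + (i + 1) by omega),
      sEq χ x (show k + 1 + i + 1 = k + (i + 1) + 1 by omega)]
    ring
  have h2 : (∑ i ∈ Finset.range N, (shiftArg (k + (i + 1)) χ x - shiftArg (k + (i + 1) + 1) χ x) *
        shiftArg k (mergeArg (i + 1) (q + 1) ω) x)
      = (∑ i ∈ Finset.range N, (shiftArg (k + i) χ x - shiftArg (k + i + 1) χ x) *
            shiftArg k (mergeArg i (q + 1) ω) x)
        + (shiftArg (k + N) χ x - shiftArg (k + N + 1) χ x) * shiftArg k ω x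
        - (shiftArg (k + 0) χ x - shiftArg (k + 0 + 1) χ x) *
            shiftArg k (mergeArg 0 (q + 1) ω) x := by
    have h3 := Finset.sum_range_succ'
      (fun i => (shiftArg (k + i) χ x - shiftArg (k + i + 1) χ x) *
        shiftArg k (mergeArg i (q + 1) ω) x) N
    rw [Finset.sum_range_succ, merge_high hω (le_refl N) (q + 1)] at h3
    linear_combination -h3
  rw [h1, h2, sEq χ x (show k + N + 1 = k + 1 + N by omega)]
  simp only [Nat.add_zero]
  ring

private lemma midlem (n m k : ℕ) (φ ψ : (ℕ → ℂ) → ℂ) (hφ : Arity n φ) (hψ : Arity m ψ)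
    (x : ℕ → ℂ) :
    ((∑ i ∈ Finset.range m, (shiftArg (k + 1 + i) φ x - shiftArg (k + 1 + i + 1) φ x) *
        (shiftArg k (mergeArg (i + 1) (n + 1) ψ) x - shiftArg (k + 1) (mergeArg i (n + 1) ψ) x))
      + (shiftArg k φ x - shiftArg (k + 1) φ x) *
        (shiftArg k (mergeArg 0 (n + 1) ψ) x - shiftArg (k + 1 + n) ψ x))
    - ((∑ i ∈ Finset.range n, (shiftArg (k + 1 + i) ψ x - shiftArg (k + 1 + i + 1) ψ x) *
        (shiftArg k (mergeArg (i + 1) (m + 1) φ) x - shiftArg (k + 1) (mergeArg i (m + 1) φ) x))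
      + (shiftArg k ψ x - shiftArg (k + 1) ψ x) *
        (shiftArg k (mergeArg 0 (m + 1) φ) x - shiftArg (k + 1 + m) φ x))
    = ((∑ i ∈ Finset.range m, (shiftArg (k + i) φ x - shiftArg (k + (i + 1)) φ x) *
          shiftArg k (mergeArg i (n + 1) ψ) x)
        - (∑ j ∈ Finset.range n, (shiftArg (k + j) ψ x - shiftArg (k + (j + 1)) ψ x) *
          shiftArg k (mergeArg j (m + 1) φ) x)
        - shiftArg k φ x * shiftArg (k + n) ψ x + shiftArg (k + m) φ x * shiftArg k ψ x)
    - ((∑ i ∈ Finset.range m, (shiftArg (k + 1 + i) φ x - shiftArg (k + 1 + (i + 1)) φ x) *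
          shiftArg (k + 1) (mergeArg i (n + 1) ψ) x)
        - (∑ j ∈ Finset.range n, (shiftArg (k + 1 + j) ψ x - shiftArg (k + 1 + (j + 1)) ψ x) *
          shiftArg (k + 1) (mergeArg j (m + 1) φ) x)
        - shiftArg (k + 1) φ x * shiftArg (k + 1 + n) ψ x
        + shiftArg (k + 1 + m) φ x * shiftArg (k + 1) ψ x) := by
  rw [sidebit m n k φ ψ hψ x, sidebit n m k ψ φ hφ x]
  have r1 : (∑ i ∈ Finset.range m, (shiftArg (k + i) φ x - shiftArg (k + (i + 1)) φ x) *
        shiftArg k (mergeArg i (n + 1) ψ) x)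
      = ∑ i ∈ Finset.range m, (shiftArg (k + i) φ x - shiftArg (k + i + 1) φ x) *
        shiftArg k (mergeArg i (n + 1) ψ) x :=
    Finset.sum_congr rfl fun i _ => by rw [sEq φ x (show k + (i + 1) = k + i + 1 by omega)]
  have r2 : (∑ j ∈ Finset.range n, (shiftArg (k + j) ψ x - shiftArg (k + (j + 1)) ψ x) *
        shiftArg k (mergeArg j (m + 1) φ) x)
      = ∑ j ∈ Finset.range n, (shiftArg (k + j) ψ x - shiftArg (k + j + 1) ψ x) *
        shiftArg k (mergeArg j (m + 1) φ) x :=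
    Finset.sum_congr rfl fun j _ => by rw [sEq ψ x (show k + (j + 1) = k + j + 1 by omega)]
  have r3 : (∑ i ∈ Finset.range m, (shiftArg (k + 1 + i) φ x - shiftArg (k + 1 + (i + 1)) φ x) *
        shiftArg (k + 1) (mergeArg i (n + 1) ψ) x)
      = ∑ i ∈ Finset.range m, (shiftArg (k + (i + 1)) φ x - shiftArg (k + (i + 1) + 1) φ x) *
        shiftArg (k + 1) (mergeArg i (n + 1) ψ) x :=
    Finset.sum_congr rfl fun i _ => by
      rw [sEq φ x (show k + 1 + i = k + (i + 1) by omega),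
        sEq φ x (show k + 1 + (i + 1) = k + (i + 1) + 1 by omega)]
  have r4 : (∑ j ∈ Finset.range n, (shiftArg (k + 1 + j) ψ x - shiftArg (k + 1 + (j + 1)) ψ x) *
        shiftArg (k + 1) (mergeArg j (m + 1) φ) x)
      = ∑ j ∈ Finset.range n, (shiftArg (k + (j + 1)) ψ x - shiftArg (k + (j + 1) + 1) ψ x) *
        shiftArg (k + 1) (mergeArg j (m + 1) φ) x :=
    Finset.sum_congr rfl fun j _ => by
      rw [sEq ψ x (show k + 1 + j = k + (j + 1) by omega),
        sEq ψ x (show k + 1 + (j + 1) = k + (j + 1) + 1 by omega)]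
  rw [r1, r2, r3, r4]
  ring


/-- The formula `φ • f` defines a Lie module structure of the graded Lie algebra `𝒢₀`
on `F = ⊕_{m≥0} F_m`: `φ•(ψ•f) − ψ•(φ•f) = [φ,ψ]₀ • f`. -/
theorem G0_module_structure (n m p : ℕ) (hn : 1 ≤ n) (hm : 1 ≤ m)
    (φ ψ f : (ℕ → ℂ) → ℂ)
    (hφa : Arity n φ) (hψa : Arity m ψ) (hfa : Arity p f)
    (hφc : CycInv n φ) (hψc : CycInv m ψ) :
    ∀ x : ℕ → ℂ,
      Act n (m + p) φ (Act m p ψ f) x - Act m (n + p) ψ (Act n p φ f) x =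
        Act (n + m) p (Br0 n m φ ψ) f x := by
  intro x
  rw [side n m p φ ψ f hψa hfa x, side m n p ψ φ f hφa hfa x, act_apply]
  simp only [shift_br, br_apply0, shift_shift, shift_zero, Nat.add_zero, Nat.zero_add]
  rw [show m + n = n + m from Nat.add_comm m n,
    sEq φ x (show p + m = m + p from Nat.add_comm p m),
    sEq ψ x (show p + n = n + p from Nat.add_comm p n)]
  have hc2φ : (∑ k ∈ Finset.range p, ∑ k' ∈ Finset.Ico (k + 1) p,
        (shiftArg (k' + m) φ x - shiftArg (k' + m + 1) φ x) *
          ((shiftArg k ψ x - shiftArg (k + 1) ψ x) *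
            mergeArg k (m + 1) (mergeArg k' (n + 1) f) x))
      = ∑ k ∈ Finset.range p, ∑ i ∈ Finset.range k,
        (shiftArg i ψ x - shiftArg (i + 1) ψ x) *
          ((shiftArg (k + m) φ x - shiftArg (k + 1 + m) φ x) *
            mergeArg (k + m) (n + 1) (mergeArg i (m + 1) f) x) := by
    rw [triExchange p (fun a b => (shiftArg (b + m) φ x - shiftArg (b + m + 1) φ x) *
      ((shiftArg a ψ x - shiftArg (a + 1) ψ x) *
        mergeArg a (m + 1) (mergeArg b (n + 1) f) x))]
    refine Finset.sum_congr rfl fun k _ => Finset.sum_congr rfl fun i hi => ?_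
    simp only [Finset.mem_range] at hi
    beta_reduce
    rw [merge_merge_swap f m n i k hi, sEq φ x (show k + m + 1 = k + 1 + m by omega)]
    ring
  have hc2ψ : (∑ k ∈ Finset.range p, ∑ k' ∈ Finset.Ico (k + 1) p,
        (shiftArg (k' + n) ψ x - shiftArg (k' + n + 1) ψ x) *
          ((shiftArg k φ x - shiftArg (k + 1) φ x) *
            mergeArg k (n + 1) (mergeArg k' (m + 1) f) x))
      = ∑ k ∈ Finset.range p, ∑ i ∈ Finset.range k,
        (shiftArg i φ x - shiftArg (i + 1) φ x) *
          ((shiftArg (k + n) ψ x - shiftArg (k + 1 + n) ψ x) *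
            mergeArg (k + n) (m + 1) (mergeArg i (n + 1) f) x) := by
    rw [triExchange p (fun a b => (shiftArg (b + n) ψ x - shiftArg (b + n + 1) ψ x) *
      ((shiftArg a φ x - shiftArg (a + 1) φ x) *
        mergeArg a (n + 1) (mergeArg b (m + 1) f) x))]
    refine Finset.sum_congr rfl fun k _ => Finset.sum_congr rfl fun i hi => ?_
    simp only [Finset.mem_range] at hi
    beta_reduce
    rw [merge_merge_swap f n m i k hi, sEq ψ x (show k + n + 1 = k + 1 + n by omega)]
    ring
  have hmid : (∑ k ∈ Finset.range p,
        ((∑ i ∈ Finset.range m, (shiftArg (k + 1 + i) φ x - shiftArg (k + 1 + i + 1) φ x) *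
            (shiftArg k (mergeArg (i + 1) (n + 1) ψ) x - shiftArg (k + 1) (mergeArg i (n + 1) ψ) x))
          + (shiftArg k φ x - shiftArg (k + 1) φ x) *
            (shiftArg k (mergeArg 0 (n + 1) ψ) x - shiftArg (k + 1 + n) ψ x))
        * mergeArg k (n + m + 1) f x)
      - (∑ k ∈ Finset.range p,
        ((∑ i ∈ Finset.range n, (shiftArg (k + 1 + i) ψ x - shiftArg (k + 1 + i + 1) ψ x) *
            (shiftArg k (mergeArg (i + 1) (m + 1) φ) x - shiftArg (k + 1) (mergeArg i (m + 1) φ) x))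
          + (shiftArg k ψ x - shiftArg (k + 1) ψ x) *
            (shiftArg k (mergeArg 0 (m + 1) φ) x - shiftArg (k + 1 + m) φ x))
        * mergeArg k (n + m + 1) f x)
      = ∑ k ∈ Finset.range p,
        (((∑ i ∈ Finset.range m, (shiftArg (k + i) φ x - shiftArg (k + (i + 1)) φ x) *
              shiftArg k (mergeArg i (n + 1) ψ) x)
            - (∑ j ∈ Finset.range n, (shiftArg (k + j) ψ x - shiftArg (k + (j + 1)) ψ x) *
              shiftArg k (mergeArg j (m + 1) φ) x)
            - shiftArg k φ x * shiftArg (k + n) ψ x + shiftArg (k + m) φ x * shiftArg k ψ x)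
          - ((∑ i ∈ Finset.range m, (shiftArg (k + 1 + i) φ x - shiftArg (k + 1 + (i + 1)) φ x) *
              shiftArg (k + 1) (mergeArg i (n + 1) ψ) x)
            - (∑ j ∈ Finset.range n, (shiftArg (k + 1 + j) ψ x - shiftArg (k + 1 + (j + 1)) ψ x) *
              shiftArg (k + 1) (mergeArg j (m + 1) φ) x)
            - shiftArg (k + 1) φ x * shiftArg (k + 1 + n) ψ x
            + shiftArg (k + 1 + m) φ x * shiftArg (k + 1) ψ x))
        * mergeArg k (n + m + 1) f x := by
    rw [← Finset.sum_sub_distrib]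
    refine Finset.sum_congr rfl fun k _ => ?_
    rw [← sub_mul, midlem n m k φ ψ hφa hψa x]
  have hb1φ : (∑ i ∈ Finset.range m, (shiftArg i φ x - shiftArg (i + 1) φ x) *
        (mergeArg i (n + 1) ψ x * shiftArg (n + m) f x))
      = (∑ i ∈ Finset.range m, (shiftArg i φ x - shiftArg (i + 1) φ x) *
          mergeArg i (n + 1) ψ x) * shiftArg (n + m) f x := by
    rw [Finset.sum_mul]
    exact Finset.sum_congr rfl fun i _ => by ring
  have hb1ψ : (∑ i ∈ Finset.range n, (shiftArg i ψ x - shiftArg (i + 1) ψ x) *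
        (mergeArg i (m + 1) φ x * shiftArg (n + m) f x))
      = (∑ i ∈ Finset.range n, (shiftArg i ψ x - shiftArg (i + 1) ψ x) *
          mergeArg i (m + 1) φ x) * shiftArg (n + m) f x := by
    rw [Finset.sum_mul]
    exact Finset.sum_congr rfl fun i _ => by ring
  have hb2φ : (∑ i ∈ Finset.range p, (shiftArg (m + i) φ x - shiftArg (m + i + 1) φ x) *
        (ψ x * shiftArg m (mergeArg i (n + 1) f) x))
      = (∑ k ∈ Finset.range p, (shiftArg (m + k) φ x - shiftArg (m + (k + 1)) φ x) *
          shiftArg m (mergeArg k (n + 1) f) x) * ψ x := by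
    rw [Finset.sum_mul]
    exact Finset.sum_congr rfl fun i _ => by
      rw [sEq φ x (show m + (i + 1) = m + i + 1 by omega)]; ring
  have hb2ψ : (∑ i ∈ Finset.range p, (shiftArg (n + i) ψ x - shiftArg (n + i + 1) ψ x) *
        (φ x * shiftArg n (mergeArg i (m + 1) f) x))
      = (∑ k ∈ Finset.range p, (shiftArg (n + k) ψ x - shiftArg (n + (k + 1)) ψ x) *
          shiftArg n (mergeArg k (m + 1) f) x) * φ x := by
    rw [Finset.sum_mul]
    exact Finset.sum_congr rfl fun i _ => by
      rw [sEq ψ x (show n + (i + 1) = n + i + 1 by omega)]; ring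
  have hb3φ : (∑ i ∈ Finset.range p, (shiftArg i φ x - shiftArg (i + 1) φ x) *
        (shiftArg (n + p) ψ x * mergeArg i (n + 1) f x))
      = (∑ k ∈ Finset.range p, (shiftArg k φ x - shiftArg (k + 1) φ x) *
          mergeArg k (n + 1) f x) * shiftArg (n + p) ψ x := by
    rw [Finset.sum_mul]
    exact Finset.sum_congr rfl fun i _ => by ring
  have hb3ψ : (∑ i ∈ Finset.range p, (shiftArg i ψ x - shiftArg (i + 1) ψ x) *
        (shiftArg (m + p) φ x * mergeArg i (m + 1) f x))
      = (∑ k ∈ Finset.range p, (shiftArg k ψ x - shiftArg (k + 1) ψ x) *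
          mergeArg k (m + 1) f x) * shiftArg (m + p) φ x := by
    rw [Finset.sum_mul]
    exact Finset.sum_congr rfl fun i _ => by ring
  have hb4φ : (∑ i ∈ Finset.range m, (shiftArg (p + i) φ x - shiftArg (p + i + 1) φ x) *
        (shiftArg p (mergeArg i (n + 1) ψ) x * f x))
      = (∑ i ∈ Finset.range m, (shiftArg (p + i) φ x - shiftArg (p + (i + 1)) φ x) *
          shiftArg p (mergeArg i (n + 1) ψ) x) * f x := by
    rw [Finset.sum_mul]
    exact Finset.sum_congr rfl fun i _ => by
      rw [sEq φ x (show p + (i + 1) = p + i + 1 by omega)]; ring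
  have hb4ψ : (∑ i ∈ Finset.range n, (shiftArg (p + i) ψ x - shiftArg (p + i + 1) ψ x) *
        (shiftArg p (mergeArg i (m + 1) φ) x * f x))
      = (∑ i ∈ Finset.range n, (shiftArg (p + i) ψ x - shiftArg (p + (i + 1)) ψ x) *
          shiftArg p (mergeArg i (m + 1) φ) x) * f x := by
    rw [Finset.sum_mul]
    exact Finset.sum_congr rfl fun i _ => by
      rw [sEq ψ x (show p + (i + 1) = p + i + 1 by omega)]; ring
  linear_combination hc2φ - hc2ψ + hmid - hb1φ + hb1ψ - hb2φ + hb2ψ + hb3φ - hb3ψ + hb4φ - hb4ψ
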